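/- Let $m \ge 1$ and let $\ell_1, \dots, \ell_m$ be positive integers with $\gcd(\ell_1, \dots, \ell_m) = 1$. Let $T = \{ (u^{\ell_1}, \dots, u^{\ell_m}) : u \in \mathbb{C}^\times \} \le (\mathbb{C}^\times)^m$, let $D$ be a finite subgroup of $(\mathbb{C}^\times)^m$, let $G$ be the subgroup of $(\mathbb{C}^\times)^m$ generated by $D$ and $T$, and let $H = D \cap T$. For $I = (i_1, \dots, i_m) \in \mathbb{Z}^m$ and $g \in (\mathbb{C}^\times)^m$ write $g^I = \prod_j g_j^{i_j}$; let $L_G = \{ I \in \mathbb{Z}^m : g^I = 1 \text{ for all } g \in G \}$ and $L_D = \{ I \in \mathbb{Z}^m : d^I = 1 \text{ for all } d \in D \}$, and let $w : \mathbb{Z}^m \to \mathbb{Z}$ be $w(I) = \sum_j i_j \ell_j$. Then the quotient group $L_D / L_G$ is infinite cyclic, $w$ vanishes on $L_G$ (so induces a homomorphism $L_D/L_G \to \mathbb{Z}$), and this induced homomorphism is injective with image $|H| \cdot \mathbb{Z}$; in particular $L_D/L_G$ is generated by a class of weight $|H| = |D \cap T|$. -/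

import Mathlib

/-- `u ^ (∑ c j) = ∏ u ^ c j` for integer exponents. -/
lemma NW_zpow_sum {G : Type*} [CommGroup G] (u : G) {α : Type*} (s : Finset α) (c : α → ℤ) :
    u ^ (∑ j ∈ s, c j) = ∏ j ∈ s, u ^ c j := by
  classical
  induction s using Finset.induction with
  | empty => simp
  | @insert _ _ h ih => rw [Finset.sum_insert h, Finset.prod_insert h, zpow_add, ih]

/-- The monomial character of `(ℂˣ)^m` attached to `I : ℤ^m`. -/
def NW_mchar {m : ℕ} (I : Fin m → ℤ) : (Fin m → ℂˣ) →* ℂˣ where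
  toFun g := ∏ j, g j ^ I j
  map_one' := by simp
  map_mul' g h := by
    simp only [Pi.mul_apply, mul_zpow, Finset.prod_mul_distrib]

lemma NW_mchar_apply {m : ℕ} (I : Fin m → ℤ) (g : Fin m → ℂˣ) :
    NW_mchar I g = ∏ j, g j ^ I j := rfl

/-- `ZMod N` is self-injective (Baer's criterion form). -/
lemma NW_zmod_baer (N : ℕ) [NeZero N] : Module.Baer (ZMod N) (ZMod N) := by
  have hN0 : N ≠ 0 := NeZero.ne N
  haveI : IsPrincipalIdealRing (ZMod N) :=
    IsPrincipalIdealRing.of_surjective (Int.castRingHom (ZMod N)) ZMod.intCast_surjective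
  intro I g
  obtain ⟨a, ha⟩ := (IsPrincipalIdealRing.principal I).principal
  subst ha
  set v : ZMod N := g ⟨a, Submodule.mem_span_singleton_self a⟩ with hv
  set d : ℕ := Nat.gcd (ZMod.val a) N with hd
  have hdN : d ∣ N := Nat.gcd_dvd_right _ _
  have hda : d ∣ ZMod.val a := Nat.gcd_dvd_left _ _
  have hd0 : d ≠ 0 := fun h => hN0 (Nat.eq_zero_of_gcd_eq_zero_right h)
  set k : ℕ := N / d with hk
  have hkd : k * d = N := Nat.div_mul_cancel hdN
  have hk0 : k ≠ 0 := by
    intro h; rw [h, zero_mul] at hkd; exact hN0 hkd.symm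
  -- (k : ZMod N) * a = 0
  have hka : (k : ZMod N) * a = 0 := by
    obtain ⟨s, hs⟩ := hda
    have : ((k * ZMod.val a : ℕ) : ZMod N) = 0 := by
      rw [ZMod.natCast_eq_zero_iff]
      exact ⟨s, by rw [hs, ← mul_assoc, hkd]⟩
    rw [Nat.cast_mul] at this
    rwa [show ((ZMod.val a : ℕ) : ZMod N) = a by rw [ZMod.natCast_val, ZMod.cast_id]] at this
  -- hence (k : ZMod N) * v = 0
  have hkv : (k : ZMod N) * v = 0 := by
    have h1 : ((k : ZMod N) • (⟨a, Submodule.mem_span_singleton_self a⟩ :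
        Ideal.span {a}) : Ideal.span {a}) = 0 := by
      apply Subtype.ext
      simpa [smul_eq_mul] using hka
    calc (k : ZMod N) * v = (k : ZMod N) • v := by rw [smul_eq_mul]
    _ = g ((k : ZMod N) • ⟨a, Submodule.mem_span_singleton_self a⟩) := (g.map_smul _ _).symm
    _ = 0 := by rw [h1, g.map_zero]
  -- d ∣ v.val
  have hdv : d ∣ ZMod.val v := by
    have : ((k * ZMod.val v : ℕ) : ZMod N) = 0 := by
      rw [Nat.cast_mul]
      rw [show ((ZMod.val v : ℕ) : ZMod N) = v by rw [ZMod.natCast_val, ZMod.cast_id]]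
      exact hkv
    rw [ZMod.natCast_eq_zero_iff] at this
    have h2 : k * d ∣ k * ZMod.val v := by rw [hkd]; exact this
    exact (mul_dvd_mul_iff_left (by exact_mod_cast hk0 : (k:ℕ) ≠ 0)).mp h2
  -- Bezout
  have hbez : (d : ZMod N) = a * ((Nat.gcdA (ZMod.val a) N : ℤ) : ZMod N) := by
    have := Nat.gcd_eq_gcd_ab (ZMod.val a) N
    have h3 := congrArg (fun z : ℤ => ((z : ℤ) : ZMod N)) this
    push_cast at h3
    rw [ZMod.natCast_val, ZMod.cast_id, ZMod.natCast_self] at h3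
    simpa using h3
  obtain ⟨s, hs⟩ := hdv
  set u : ZMod N := ((Nat.gcdA (ZMod.val a) N : ℤ) : ZMod N) * (s : ZMod N) with hu
  have hvau : v = a * u := by
    have : v = ((ZMod.val v : ℕ) : ZMod N) := by rw [ZMod.natCast_val, ZMod.cast_id]
    rw [this, hs]
    push_cast
    rw [hbez]
    ring
  refine ⟨LinearMap.toSpanSingleton _ _ u, fun x hx => ?_⟩
  obtain ⟨r, hr⟩ := Ideal.mem_span_singleton'.mp hx
  have hxel : (⟨x, hx⟩ : Ideal.span {a}) = r • ⟨a, Submodule.mem_span_singleton_self a⟩ :=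
    Subtype.ext (by simp [smul_eq_mul, hr])
  rw [hxel, g.map_smul]
  simp only [LinearMap.toSpanSingleton_apply, smul_eq_mul, ← hv, hvau, ← hr]
  ring

theorem kernel_of_character_restriction (m : ℕ) (hm : 1 ≤ m)
    (ℓ : Fin m → ℕ) (hℓ : ∀ j, 0 < ℓ j)
    (hgcd : Finset.gcd Finset.univ ℓ = 1)
    (T : Subgroup (Fin m → ℂˣ))
    (hT : (T : Set (Fin m → ℂˣ)) = {y | ∃ u : ℂˣ, y = fun j => u ^ ℓ j})
    (D : Subgroup (Fin m → ℂˣ)) (hD : Finite D)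
    (G : Subgroup (Fin m → ℂˣ)) (hG : G = D ⊔ T)
    (H : Subgroup (Fin m → ℂˣ)) (hH : H = D ⊓ T)
    (LG LD : AddSubgroup (Fin m → ℤ))
    (hLG : ∀ I : Fin m → ℤ, I ∈ LG ↔ ∀ g ∈ G, (∏ j, (g j) ^ (I j)) = 1)
    (hLD : ∀ I : Fin m → ℤ, I ∈ LD ↔ ∀ d ∈ D, (∏ j, (d j) ^ (I j)) = 1)
    (w : (Fin m → ℤ) →+ ℤ) (hw : ∀ I, w I = ∑ j, I j * (ℓ j : ℤ)) :
    Nonempty ((↥LD ⧸ LG.addSubgroupOf LD) ≃+ ℤ) ∧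
    (∀ I ∈ LG, w I = 0) ∧
    (∀ I ∈ LD, w I = 0 → I ∈ LG) ∧
    w '' (LD : Set (Fin m → ℤ)) = {z : ℤ | (Nat.card H : ℤ) ∣ z} := by
  classical
  -- the one-parameter subgroup
  set φ : ℂˣ →* (Fin m → ℂˣ) :=
    { toFun := fun u => fun j => u ^ ℓ j
      map_one' := by funext j; simp
      map_mul' := fun u v => by funext j; simp [mul_pow] } with hφdef
  have hTmem : ∀ y : Fin m → ℂˣ, y ∈ T ↔ ∃ u : ℂˣ, y = φ u := by
    intro y; rw [← SetLike.mem_coe, hT]; exact Iff.rfl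
  have hweight : ∀ (u : ℂˣ) (I : Fin m → ℤ), (∏ j, (φ u j) ^ I j) = u ^ (w I) := by
    intro u I
    rw [hw]
    have hterm : ∀ j : Fin m, (φ u j) ^ I j = u ^ (I j * (ℓ j : ℤ)) := by
      intro j
      show (u ^ ℓ j) ^ I j = _
      rw [← zpow_natCast u (ℓ j), ← zpow_mul, mul_comm]
    rw [Finset.prod_congr rfl (fun j _ => hterm j), ← NW_zpow_sum]
  have hφinj : Function.Injective φ := by
    intro u v huv
    have h1 : ∀ j, (u / v) ^ ℓ j = 1 := by
      intro j
      have h3 : u ^ ℓ j = v ^ ℓ j := congrFun huv j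
      rw [div_pow, h3, div_self']
    have h2 : orderOf (u / v) ∣ Finset.gcd Finset.univ ℓ :=
      Finset.dvd_gcd fun j _ => orderOf_dvd_of_pow_eq_one (h1 j)
    rw [hgcd, Nat.dvd_one] at h2
    exact div_eq_one.mp (orderOf_eq_one_iff.mp h2)
  -- the order of D
  haveI : Finite ↥D := hD
  set N : ℕ := Nat.card ↥D with hNdef
  have hN0 : N ≠ 0 := Nat.card_pos.ne'
  haveI : NeZero N := ⟨hN0⟩
  have hDpow : ∀ d ∈ D, ∀ j, (d j) ^ N = 1 := by
    intro d hd j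
    have h1 : (⟨d, hd⟩ : D) ^ N = 1 := pow_card_eq_one'
    have h2 : d ^ N = 1 := by simpa using congrArg Subtype.val h1
    simpa using congrFun h2 j
  -- the intersection H and its preimage H'
  have hHD : H ≤ D := hH ▸ inf_le_left
  have hHT : H ≤ T := hH ▸ inf_le_right
  haveI : Finite ↥H :=
    Finite.of_injective (Subgroup.inclusion hHD) (Subgroup.inclusion_injective hHD)
  set nH : ℕ := Nat.card ↥H with hnHdef
  have hnH0 : nH ≠ 0 := Nat.card_pos.ne'
  haveI : NeZero nH := ⟨hnH0⟩
  have hnHN : nH ∣ N := Subgroup.card_dvd_of_le hHD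
  set H' : Subgroup ℂˣ := H.comap φ with hH'def
  haveI : Finite ↥H' :=
    Finite.of_injective (fun x : ↥H' => (⟨φ x.1, x.2⟩ : ↥H))
      (fun x y hxy => Subtype.ext (hφinj (congrArg Subtype.val hxy)))
  have hcardH' : Nat.card ↥H' = nH := by
    refine Nat.card_eq_of_bijective (fun x : ↥H' => (⟨φ x.1, x.2⟩ : ↥H)) ⟨?_, ?_⟩
    · exact fun x y hxy => Subtype.ext (hφinj (congrArg Subtype.val hxy))
    · intro y
      obtain ⟨u, hu⟩ := (hTmem _).mp (hHT y.2)
      refine ⟨⟨u, show φ u ∈ H by rw [← hu]; exact y.2⟩, Subtype.ext hu.symm⟩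
  haveI : IsCyclic ↥H' := subgroup_units_cyclic H'
  obtain ⟨ζ', hζ'⟩ := IsCyclic.exists_generator (α := ↥H')
  set ζ : ℂˣ := (ζ' : ℂˣ) with hζdef
  have hζord : orderOf ζ = nH := by
    rw [Subgroup.orderOf_coe, orderOf_eq_card_of_forall_mem_zpowers hζ', hcardH']
  have hζprim : IsPrimitiveRoot ζ nH := by
    rw [← hζord]; exact IsPrimitiveRoot.orderOf ζ
  have hH'mem : ∀ u : ℂˣ, u ∈ H' ↔ u ^ nH = 1 := by
    intro u
    constructor
    · intro hu
      have h1 : (⟨u, hu⟩ : H') ^ Nat.card ↥H' = 1 := pow_card_eq_one'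
      have h2 : u ^ Nat.card ↥H' = 1 := by
        calc u ^ Nat.card ↥H' = ((⟨u, hu⟩ ^ Nat.card ↥H' : ↥H') : ℂˣ) := by
              rw [SubmonoidClass.coe_pow]
        _ = 1 := by rw [h1]; rfl
      rwa [hcardH'] at h2
    · intro hu
      have h3 : u ∈ rootsOfUnity nH ℂ := (mem_rootsOfUnity nH u).mpr hu
      rw [← hζprim.zpowers_eq] at h3
      obtain ⟨z, hz⟩ := Subgroup.mem_zpowers_iff.mp h3
      rw [← hz]
      exact zpow_mem ζ'.2 z
  have hφD : ∀ u : ℂˣ, φ u ∈ D ↔ u ^ nH = 1 := by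
    intro u
    rw [← hH'mem u]
    constructor
    · intro hu
      show φ u ∈ H
      rw [hH, Subgroup.mem_inf]
      exact ⟨hu, (hTmem _).mpr ⟨u, rfl⟩⟩
    · intro hu
      exact hHD hu
  -- w vanishes on L_G
  have fact1 : ∀ I ∈ LG, w I = 0 := by
    intro I hI
    set u2 : ℂˣ := Units.mk0 (2 : ℂ) two_ne_zero with hu2def
    have hu2T : φ u2 ∈ T := (hTmem _).mpr ⟨u2, rfl⟩
    have hu2G : φ u2 ∈ G := by
      rw [hG]; exact (le_sup_right : T ≤ D ⊔ T) hu2T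
    have h1 := (hLG I).mp hI _ hu2G
    rw [hweight] at h1
    have hord : orderOf u2 = 0 := by
      rw [orderOf_eq_zero_iff]
      intro hfin
      obtain ⟨n, hn, hpow⟩ := isOfFinOrder_iff_pow_eq_one.mp hfin
      have h2 : ((2 : ℂ)) ^ n = 1 := by
        simpa [hu2def] using congrArg Units.val hpow
      have habs := congrArg (‖·‖) h2
      simp only [norm_pow, Complex.norm_two, norm_one] at habs
      have := one_lt_pow₀ (one_lt_two (α := ℝ)) hn.ne'
      linarith
    have h4 := orderOf_dvd_iff_zpow_eq_one.mpr h1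
    rw [hord] at h4
    exact_mod_cast zero_dvd_iff.mp (by exact_mod_cast h4)
  -- weights on L_D are divisible by nH
  have fact2 : ∀ I ∈ LD, (nH : ℤ) ∣ w I := by
    intro I hI
    have hζD : φ ζ ∈ D := hHD ζ'.2
    have h1 := (hLD I).mp hI _ hζD
    rw [hweight ζ I] at h1
    rw [← hζord]
    exact orderOf_dvd_iff_zpow_eq_one.mpr h1
  -- membership in L_G from L_D plus weight zero
  have fact3 : ∀ I ∈ LD, w I = 0 → I ∈ LG := by
    intro I hI hw0
    rw [hLG]
    intro g hg
    have hker : G ≤ (NW_mchar I).ker := by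
      rw [hG]
      apply sup_le
      · intro d hd
        exact (hLD I).mp hI d hd
      · intro t ht
        obtain ⟨u, rfl⟩ := (hTmem t).mp ht
        show NW_mchar I (φ u) = 1
        rw [NW_mchar_apply, hweight, hw0, zpow_zero]
    exact hker hg
  -- === construction of an element of L_D with weight exactly nH ===
  -- a primitive N-th root of unity
  have hprim := Complex.isPrimitiveRoot_exp N hN0
  set ρ : ℂˣ := (hprim.isUnit hN0).unit with hρdef
  have hρ : IsPrimitiveRoot ρ N := hprim.isUnit_unit hN0
  have hρord : orderOf ρ = N := hρ.eq_orderOf.symm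
  -- discrete exponential  ZMod N →+ Additive ℂˣ
  have hfker : (zmultiplesHom (Additive ℂˣ) (Additive.ofMul ρ)) (N : ℤ) = 0 := by
    rw [zmultiplesHom_apply, ← ofMul_zpow, zpow_natCast, hρ.pow_eq_one]
    rfl
  set f : ZMod N →+ Additive ℂˣ := ZMod.lift N ⟨_, hfker⟩ with hfdef
  have hfz : ∀ z : ℤ, Additive.toMul (f (z : ZMod N)) = ρ ^ z := by
    intro z
    rw [hfdef, ZMod.lift_coe, zmultiplesHom_apply, toMul_zsmul, toMul_ofMul]
  have hfn : ∀ b : ZMod N, Additive.toMul (f b) = ρ ^ (b.val) := by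
    intro b
    have hb : ((b.val : ℤ) : ZMod N) = b := by
      push_cast
      rw [ZMod.natCast_val, ZMod.cast_id]
    have h1 : Additive.toMul (f ((b.val : ℤ) : ZMod N)) = ρ ^ (b.val : ℤ) := hfz _
    rw [hb] at h1
    rw [h1, zpow_natCast]
  have hf0 : ∀ b : ZMod N, Additive.toMul (f b) = 1 → b = 0 := by
    intro b hb
    rw [hfn] at hb
    have h1 := orderOf_dvd_of_pow_eq_one hb
    rw [hρord] at h1
    exact (ZMod.val_eq_zero b).mp (Nat.eq_zero_of_dvd_of_lt h1 (ZMod.val_lt b))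
  have hfsurj : ∀ x : ℂˣ, x ^ N = 1 → ∃ b : ZMod N, Additive.toMul (f b) = x := by
    intro x hx
    have hx' : x ∈ rootsOfUnity N ℂ := (mem_rootsOfUnity N x).mpr hx
    rw [← hρ.zpowers_eq] at hx'
    obtain ⟨z, hz⟩ := Subgroup.mem_zpowers_iff.mp hx'
    exact ⟨(z : ZMod N), by rw [hfz, hz]⟩
  -- D transported to (ZMod N)^m
  set D2 : Submodule (ZMod N) (Fin m → ZMod N) :=
    { carrier := {x | (fun j => Additive.toMul (f (x j))) ∈ D}
      zero_mem' := by
        have h1 : (fun j : Fin m => Additive.toMul (f ((0 : Fin m → ZMod N) j)))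
            = (1 : Fin m → ℂˣ) := by
          funext j
          show Additive.toMul (f 0) = 1
          rw [map_zero]; rfl
        show _ ∈ D
        rw [h1]; exact D.one_mem
      add_mem' := by
        intro x y hx hy
        have h1 : (fun j => Additive.toMul (f ((x + y) j)))
            = (fun j => Additive.toMul (f (x j))) * (fun j => Additive.toMul (f (y j))) := by
          funext j
          show Additive.toMul (f (x j + y j)) = _
          rw [map_add]; rfl
        show _ ∈ D
        rw [h1]; exact D.mul_mem hx hy
      smul_mem' := by
        intro r x hx
        have h1 : (fun j => Additive.toMul (f ((r • x) j)))
            = (fun j => Additive.toMul (f (x j))) ^ (r.val) := by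
          funext j
          show Additive.toMul (f (r * x j)) = _
          rw [show r * x j = (r.val : ℕ) • (x j) by
            rw [nsmul_eq_mul, ZMod.natCast_val, ZMod.cast_id]]
          rw [map_nsmul, toMul_nsmul]
          rfl
        show _ ∈ D
        rw [h1]; exact D.pow_mem hx r.val } with hD2def
  have hD2mem : ∀ x : Fin m → ZMod N,
      x ∈ D2 ↔ (fun j => Additive.toMul (f (x j))) ∈ D := fun _ => Iff.rfl
  set ℓ' : Fin m → ZMod N := fun j => ((ℓ j : ℕ) : ZMod N) with hℓ'def
  have hsmulℓ : ∀ r : ZMod N,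
      (fun j => Additive.toMul (f ((r • ℓ') j))) = φ (Additive.toMul (f r)) := by
    intro r
    funext j
    show Additive.toMul (f (r * ℓ' j)) = (Additive.toMul (f r)) ^ ℓ j
    rw [show r * ℓ' j = (ℓ j) • r by rw [nsmul_eq_mul]; exact mul_comm _ _]
    rw [map_nsmul, toMul_nsmul]
  set c : (Fin m → ZMod N) ⧸ D2 := Submodule.Quotient.mk ℓ' with hcdef
  set k0 : ZMod N := ((N / nH : ℕ) : ZMod N) with hk0def
  have hk0c : k0 • c = 0 := by
    rw [hcdef, ← Submodule.Quotient.mk_smul, Submodule.Quotient.mk_eq_zero]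
    show (fun j => Additive.toMul (f ((k0 • ℓ') j))) ∈ D
    rw [hsmulℓ, hφD]
    rw [← toMul_nsmul, ← map_nsmul]
    rw [show (nH : ℕ) • k0 = ((nH * (N / nH) : ℕ) : ZMod N) by
      rw [nsmul_eq_mul]; push_cast; ring]
    rw [Nat.mul_div_cancel' hnHN, ZMod.natCast_self, map_zero]
    rfl
  have hKc : LinearMap.ker (LinearMap.toSpanSingleton (ZMod N) _ c) ≤ Ideal.span {k0} := by
    intro r hr
    rw [LinearMap.mem_ker, LinearMap.toSpanSingleton_apply, hcdef,
      ← Submodule.Quotient.mk_smul, Submodule.Quotient.mk_eq_zero] at hr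
    have hφr : φ (Additive.toMul (f r)) ∈ D := by
      rw [← hsmulℓ r]; exact hr
    rw [hφD] at hφr
    have h5 : (nH : ZMod N) * r = 0 := by
      have h6 : Additive.toMul (f ((nH : ℕ) • r)) = 1 := by
        rw [map_nsmul, toMul_nsmul, hφr]
      have h7 := hf0 _ h6
      rwa [nsmul_eq_mul] at h7
    have h7 : N ∣ nH * r.val := by
      have h8 : ((nH * r.val : ℕ) : ZMod N) = 0 := by
        push_cast
        rw [ZMod.natCast_val, ZMod.cast_id]
        exact h5
      exact (ZMod.natCast_eq_zero_iff _ _).mp h8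
    have h8 : (N / nH) ∣ r.val := by
      have h9 : nH * (N / nH) ∣ nH * r.val := by
        rw [Nat.mul_div_cancel' hnHN]; exact h7
      exact (mul_dvd_mul_iff_left hnH0).mp h9
    rw [Ideal.mem_span_singleton]
    obtain ⟨t, ht⟩ := h8
    refine ⟨(t : ZMod N), ?_⟩
    rw [show r = ((r.val : ℕ) : ZMod N) by rw [ZMod.natCast_val, ZMod.cast_id], ht]
    push_cast
    rfl
  have hspan1 : Ideal.span {k0} ≤ LinearMap.ker (LinearMap.toSpanSingleton (ZMod N) _ c) := by
    rw [Ideal.span_le, Set.singleton_subset_iff, SetLike.mem_coe, LinearMap.mem_ker,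
      LinearMap.toSpanSingleton_apply]
    exact hk0c
  set ι := (Ideal.span {k0}).liftQ (LinearMap.toSpanSingleton (ZMod N) _ c) hspan1 with hιdef
  have hιinj : Function.Injective ι := by
    rw [← LinearMap.ker_eq_bot]
    exact Submodule.ker_liftQ_eq_bot _ _ hspan1 hKc
  have hspan2 : Ideal.span {k0} ≤
      LinearMap.ker (LinearMap.toSpanSingleton (ZMod N) (ZMod N) ((nH : ℕ) : ZMod N)) := by
    rw [Ideal.span_le, Set.singleton_subset_iff, SetLike.mem_coe, LinearMap.mem_ker,
      LinearMap.toSpanSingleton_apply, smul_eq_mul, ← Nat.cast_mul,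
      Nat.div_mul_cancel hnHN, ZMod.natCast_self]
  set g0 := (Ideal.span {k0}).liftQ
    (LinearMap.toSpanSingleton (ZMod N) (ZMod N) ((nH : ℕ) : ZMod N)) hspan2 with hg0def
  obtain ⟨σ, hσ⟩ := (NW_zmod_baer N).extension_property ι hιinj g0
  set Ψ : (Fin m → ZMod N) →ₗ[ZMod N] ZMod N := σ.comp D2.mkQ with hΨdef
  have hΨD : ∀ x ∈ D2, Ψ x = 0 := by
    intro x hx
    show σ (D2.mkQ x) = 0
    rw [Submodule.mkQ_apply, (Submodule.Quotient.mk_eq_zero D2).mpr hx, map_zero]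
  have hΨℓ : Ψ ℓ' = ((nH : ℕ) : ZMod N) := by
    have h1 : ι (Submodule.Quotient.mk (1 : ZMod N)) = c := by
      rw [hιdef, Submodule.liftQ_apply, LinearMap.toSpanSingleton_apply, one_smul]
    have h2 : σ (ι (Submodule.Quotient.mk (1 : ZMod N)))
        = g0 (Submodule.Quotient.mk (1 : ZMod N)) := by
      rw [← LinearMap.comp_apply, hσ]
    show σ (D2.mkQ ℓ') = _
    rw [Submodule.mkQ_apply, show (Submodule.Quotient.mk ℓ' : _ ⧸ D2) = c from rfl, ← h1, h2,
      hg0def, Submodule.liftQ_apply, LinearMap.toSpanSingleton_apply, one_smul]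
  have hexp : ∀ x : Fin m → ZMod N, Ψ x = ∑ j, x j * Ψ (Pi.single j 1) := by
    intro x
    have hx : x = ∑ j, Pi.single j (x j) := (Finset.univ_sum_single x).symm
    calc Ψ x = Ψ (∑ j, Pi.single j (x j)) := by rw [← hx]
    _ = ∑ j, Ψ (Pi.single j (x j)) := map_sum Ψ _ _
    _ = ∑ j, x j * Ψ (Pi.single j 1) := by
        refine Finset.sum_congr rfl fun j _ => ?_
        have h1 : Pi.single j (x j) = x j • (Pi.single j (1 : ZMod N) : Fin m → ZMod N) := by
          rw [← Pi.single_smul, smul_eq_mul, mul_one]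
        rw [h1, map_smul, smul_eq_mul]
  set Iv : Fin m → ℤ := fun j => ((Ψ (Pi.single j 1)).val : ℤ) with hIvdef
  have hbridge : ∀ x : Fin m → ZMod N,
      (∏ j, (Additive.toMul (f (x j))) ^ Iv j) = Additive.toMul (f (Ψ x)) := by
    intro x
    have h1 : ∀ j, (Additive.toMul (f (x j))) ^ Iv j
        = Additive.toMul (f (Ψ (Pi.single j 1) * x j)) := by
      intro j
      rw [show Iv j = (((Ψ (Pi.single j 1)).val : ℕ) : ℤ) from rfl, zpow_natCast]
      rw [show Ψ (Pi.single j 1) * x j = ((Ψ (Pi.single j 1)).val : ℕ) • x j by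
        rw [nsmul_eq_mul, ZMod.natCast_val, ZMod.cast_id]]
      rw [map_nsmul, toMul_nsmul]
    rw [Finset.prod_congr rfl fun j _ => h1 j, ← toMul_sum, ← map_sum]
    have h2 : ∑ j, Ψ (Pi.single j 1) * x j = Ψ x := by
      rw [hexp x]
      exact Finset.sum_congr rfl fun j _ => mul_comm _ _
    rw [h2]
  have hIvLD : Iv ∈ LD := by
    rw [hLD]
    intro d hd
    have hch : ∀ j, ∃ b : ZMod N, Additive.toMul (f b) = d j :=
      fun j => hfsurj _ (hDpow d hd j)
    choose x hx using hch
    have hxD2 : x ∈ D2 := by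
      show (fun j => Additive.toMul (f (x j))) ∈ D
      have : (fun j => Additive.toMul (f (x j))) = d := funext hx
      rw [this]; exact hd
    calc ∏ j, d j ^ Iv j = ∏ j, (Additive.toMul (f (x j))) ^ Iv j := by
          exact Finset.prod_congr rfl fun j _ => by rw [hx j]
    _ = Additive.toMul (f (Ψ x)) := hbridge x
    _ = 1 := by rw [hΨD x hxD2, map_zero]; rfl
  have hNdvd : (N : ℤ) ∣ (w Iv - (nH : ℤ)) := by
    have h1 : ((w Iv : ℤ) : ZMod N) = Ψ ℓ' := by
      rw [hw]
      push_cast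
      rw [hexp ℓ']
      refine Finset.sum_congr rfl fun j _ => ?_
      rw [show ((Iv j : ℤ) : ZMod N) = Ψ (Pi.single j 1) by
        rw [show Iv j = (((Ψ (Pi.single j 1)).val : ℕ) : ℤ) from rfl]
        push_cast
        rw [ZMod.natCast_val, ZMod.cast_id]]
      exact mul_comm _ _
    have h2 : ((w Iv - (nH : ℤ) : ℤ) : ZMod N) = 0 := by
      push_cast
      rw [h1, hΨℓ]
      exact sub_self _
    exact (ZMod.intCast_zmod_eq_zero_iff_dvd _ _).mp h2
  -- an element of weight 1
  obtain ⟨a0, ha0⟩ := Int.subgroup_cyclic w.range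
  have hrange_eq : w.range = AddSubgroup.zmultiples a0 := by
    rw [ha0, AddSubgroup.zmultiples_eq_closure]
  have hdvdℓ : ∀ j, a0 ∣ (ℓ j : ℤ) := by
    intro j
    have hmem : ((ℓ j : ℕ) : ℤ) ∈ w.range := by
      refine ⟨Pi.single j 1, ?_⟩
      rw [hw]
      rw [Finset.sum_eq_single j (fun i _ hij => by simp [Pi.single_eq_of_ne hij])
        (fun hj => absurd (Finset.mem_univ j) hj)]
      simp
    rw [hrange_eq] at hmem
    exact Int.mem_zmultiples_iff.mp hmem
  have h1mem : (1 : ℤ) ∈ w.range := by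
    have ha0abs : a0.natAbs = 1 := by
      have h1 : a0.natAbs ∣ Finset.gcd Finset.univ ℓ :=
        Finset.dvd_gcd fun j _ => by
          have h2 : a0.natAbs ∣ ((ℓ j : ℤ)).natAbs := Int.natAbs_dvd_natAbs.mpr (hdvdℓ j)
          simpa using h2
      rw [hgcd] at h1
      exact Nat.dvd_one.mp h1
    have haa : a0 * a0 = 1 := by
      have h2 := Int.natAbs_mul_self (a := a0)
      rw [ha0abs] at h2
      simpa using h2.symm
    rw [hrange_eq]
    exact Int.mem_zmultiples_iff.mpr ⟨a0, haa.symm⟩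
  obtain ⟨a, hwa⟩ := h1mem
  have hNLD : ∀ b : Fin m → ℤ, ((N : ℤ) • b) ∈ LD := by
    intro b
    rw [hLD]
    intro d hd
    have h1 : ∀ j : Fin m, d j ^ (((N : ℤ) • b) j) = 1 := by
      intro j
      show d j ^ ((N : ℤ) * b j) = 1
      rw [zpow_mul, zpow_natCast, hDpow d hd j, one_zpow]
    rw [Finset.prod_congr rfl fun j _ => h1 j, Finset.prod_const_one]
  obtain ⟨t, ht⟩ := hNdvd
  set I0 : Fin m → ℤ := Iv - t • ((N : ℤ) • a) with hI0def
  have hI0LD : I0 ∈ LD := AddSubgroup.sub_mem _ hIvLD (AddSubgroup.zsmul_mem _ (hNLD a) t)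
  have hwI0 : w I0 = (nH : ℤ) := by
    rw [hI0def, map_sub, map_zsmul, map_zsmul, hwa]
    rw [smul_eq_mul, smul_eq_mul, mul_one]
    linarith [ht]
  -- === assembly ===
  have himage : w '' (LD : Set (Fin m → ℤ)) = {z : ℤ | (nH : ℤ) ∣ z} := by
    ext z
    constructor
    · rintro ⟨I, hI, rfl⟩
      exact fact2 I hI
    · rintro ⟨t', rfl⟩
      refine ⟨t' • I0, AddSubgroup.zsmul_mem _ hI0LD t', ?_⟩
      rw [map_zsmul, hwI0, smul_eq_mul, mul_comm]
  refine ⟨?_, fact1, fact3, himage⟩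
  set W : ↥LD →+ ℤ := w.comp LD.subtype with hWdef
  have hker : W.ker = LG.addSubgroupOf LD := by
    ext x
    rw [AddMonoidHom.mem_ker, AddSubgroup.mem_addSubgroupOf]
    constructor
    · intro h0
      exact fact3 x.1 x.2 h0
    · intro hmem
      exact fact1 x.1 hmem
  set Mh : ℤ →+ ℤ := AddMonoidHom.mulRight (nH : ℤ) with hMhdef
  have hMinj : Function.Injective Mh := by
    intro x y hxy
    have h1 : x * (nH : ℤ) = y * (nH : ℤ) := hxy
    exact mul_right_cancel₀ (by exact_mod_cast hnH0) h1
  have hrange : W.range = Mh.range := by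
    ext z
    constructor
    · rintro ⟨⟨I, hI⟩, rfl⟩
      obtain ⟨t', ht'⟩ := fact2 I hI
      exact ⟨t', by show t' * (nH : ℤ) = w I; rw [ht']; ring⟩
    · rintro ⟨t', rfl⟩
      refine ⟨⟨t' • I0, AddSubgroup.zsmul_mem _ hI0LD t'⟩, ?_⟩
      show w (t' • I0) = t' * (nH : ℤ)
      rw [map_zsmul, hwI0, smul_eq_mul]
  exact ⟨(QuotientAddGroup.quotientAddEquivOfEq hker.symm).trans
    ((QuotientAddGroup.quotientKerEquivRange W).trans
      ((AddEquiv.addSubgroupCongr hrange).trans (AddMonoidHom.ofInjective hMinj).symm))⟩
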